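/- Suppose an instance of MinConCD satisfies: (1) M_ℓ ≥ a|C_ℓ| for all ℓ ∈ [k] and some constant a ∈ (0,1]; (2) Δ + 1 ≤ min_ℓ d|C_ℓ|/ln n with d ≤ a²/576; and (3) k ≤ n/4, and suppose the LP relaxation is feasible with optimal fractional cost B. Perform 4·ln n independent rounds, each assigning every tag j ∈ T independently to cluster ℓ with probability x*_ℓ(j)/2 and to no cluster otherwise, and accept the first round whose output X = (X_1,...,X_k) satisfies Z_ℓ ≥ M_ℓ/8 for all ℓ and ∑_ℓ|X_ℓ| ≤ 2B. Then with probability at least 1 − 1/n some round is accepted, i.e., the procedure returns pairwise disjoint descriptors X_1,...,X_k covering at least M_ℓ/8 objects in each cluster C_ℓ at total cost at most 2B. -/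

import Mathlib

open scoped BigOperators Classical

open Finset

set_option maxHeartbeats 1000000

namespace Stmt5Aux

lemma sum_pi_prod {ι : Type*} [Fintype ι] [DecidableEq ι] {κ : Type*} [Fintype κ]
    (f : ι → κ → ℝ) :
    ∑ ω : ι → κ, ∏ j, f j (ω j) = ∏ j, ∑ o, f j o := by
  rw [Finset.prod_univ_sum (fun _ => univ) f, Fintype.piFinset_univ]

lemma exists_coloring {S T : Type*} [Fintype S] [DecidableEq S] [DecidableEq T]
    (t : S → Finset T) (m : ℕ) (hm : 0 < m)
    (hΔ : ∀ i : S, (univ.filter fun i' : S => (t i ∩ t i').Nonempty).card < m) :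
    ∃ col : S → Fin m, ∀ i i' : S, i ≠ i' → col i = col i' → t i ∩ t i' = ∅ := by
  suffices h : ∀ s : Finset S, ∃ col : S → Fin m,
      ∀ i ∈ s, ∀ i' ∈ s, i ≠ i' → col i = col i' → t i ∩ t i' = ∅ by
    obtain ⟨col, hcol⟩ := h univ
    exact ⟨col, fun i i' => hcol i (mem_univ _) i' (mem_univ _)⟩
  intro s
  induction s using Finset.induction_on with
  | empty => exact ⟨fun _ => ⟨0, hm⟩, by simp⟩
  | @insert i s' his ih =>
    obtain ⟨col, hcol⟩ := ih
    have hcard : ((s'.filter fun i' => (t i ∩ t i').Nonempty).image col).card < m := by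
      calc ((s'.filter fun i' => (t i ∩ t i').Nonempty).image col).card
          ≤ (s'.filter fun i' => (t i ∩ t i').Nonempty).card := card_image_le
        _ ≤ (univ.filter fun i' : S => (t i ∩ t i').Nonempty).card :=
            card_le_card (filter_subset_filter _ (subset_univ _))
        _ < m := hΔ i
    have hne : (((s'.filter fun i' => (t i ∩ t i').Nonempty).image col)ᶜ).Nonempty := by
      rw [← Finset.card_pos, Finset.card_compl]
      have : Fintype.card (Fin m) = m := Fintype.card_fin m
      omega
    obtain ⟨c0, hc0⟩ := hne
    rw [Finset.mem_compl] at hc0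
    refine ⟨Function.update col i c0, ?_⟩
    intro i₁ h₁ i₂ h₂ hne12 hcoleq
    rw [Finset.mem_insert] at h₁ h₂
    have key : ∀ i' ∈ s', Function.update col i c0 i' = col i' := by
      intro i' hi'
      refine Function.update_of_ne (fun h => ?_) _ _
      subst h; exact his hi'
    rcases h₁ with rfl | h₁
    · rcases h₂ with rfl | h₂
      · exact absurd rfl hne12
      · -- i₂ ∈ s', col' i₁ = c0 = col i₂
        rw [key i₂ h₂, Function.update_self] at hcoleq
        by_contra hcon
        have hmem : col i₂ ∈ (s'.filter fun i' => (t i₁ ∩ t i').Nonempty).image col := by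
          refine Finset.mem_image_of_mem col (Finset.mem_filter.2 ⟨h₂, ?_⟩)
          exact Finset.nonempty_iff_ne_empty.2 hcon
        rw [← hcoleq] at hmem
        exact hc0 hmem
    · rcases h₂ with rfl | h₂
      · rw [key i₁ h₁, Function.update_self] at hcoleq
        by_contra hcon
        have hcon' : (t i₂ ∩ t i₁).Nonempty := by
          rw [Finset.inter_comm]
          exact Finset.nonempty_iff_ne_empty.2 hcon
        have hmem : col i₁ ∈ (s'.filter fun i' => (t i₂ ∩ t i').Nonempty).image col :=
          Finset.mem_image_of_mem col (Finset.mem_filter.2 ⟨h₁, hcon'⟩)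
        rw [hcoleq] at hmem
        exact hc0 hmem
      · rw [key i₁ h₁, key i₂ h₂] at hcoleq
        exact hcol i₁ h₁ i₂ h₂ hne12 hcoleq


variable {T : Type*} [Fintype T] [DecidableEq T] {κ : Type*} [Fintype κ]

/-- marginalization at a single coordinate -/
lemma sum_q_single (w : T → κ → ℝ) (hw : ∀ j, ∑ o, w j o = 1)
    (j : T) (g : κ → ℝ) :
    ∑ ω : T → κ, (∏ j', w j' (ω j')) * g (ω j) = ∑ o, w j o * g o := by
  calc ∑ ω : T → κ, (∏ j', w j' (ω j')) * g (ω j)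
      = ∑ ω : T → κ, ∏ j', (w j' (ω j') * if j' = j then g (ω j') else 1) := by
        refine Finset.sum_congr rfl fun ω _ => ?_
        rw [Finset.prod_mul_distrib, Finset.prod_ite_eq' univ j (fun j' => g (ω j')),
          if_pos (mem_univ j)]
    _ = ∏ j', ∑ o, (w j' o * if j' = j then g o else 1) :=
        sum_pi_prod (fun j' o => w j' o * if j' = j then g o else 1)
    _ = ∑ o, w j o * g o := by
        have h1 : ∀ j' : T, (∑ o, (w j' o * if j' = j then g o else 1))
            = if j' = j then ∑ o, w j' o * g o else 1 := by
          intro j'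
          by_cases h : j' = j
          · simp only [h, if_true]
          · simp only [h, if_false, mul_one, hw j']
        rw [Finset.prod_congr rfl fun j' _ => h1 j',
          Finset.prod_ite_eq' univ j (fun j' => ∑ o, w j' o * g o), if_pos (mem_univ j)]

/-- independence over disjoint tag sets -/
lemma exp_prod_affine (w : T → κ → ℝ) (hw : ∀ j, ∑ o, w j o = 1)
    {ι : Type*} [DecidableEq ι] (V : Finset ι) (tt : ι → Finset T)
    (hdisj : ∀ i ∈ V, ∀ i' ∈ V, i ≠ i' → tt i ∩ tt i' = ∅)
    (χ : T → κ → ℝ) (aa bb : ℝ) :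
    ∑ ω : T → κ, (∏ j, w j (ω j)) * ∏ i ∈ V, (aa + bb * ∏ j ∈ tt i, χ j (ω j))
      = ∏ i ∈ V, (aa + bb * ∏ j ∈ tt i, (∑ o, w j o * χ j o)) := by
  have key : ∀ U : Finset ι, U ⊆ V →
      ∑ ω : T → κ, (∏ j, w j (ω j)) * ∏ i ∈ U, ∏ j ∈ tt i, χ j (ω j)
        = ∏ i ∈ U, ∏ j ∈ tt i, (∑ o, w j o * χ j o) := by
    intro U hU
    have hpd : (↑U : Set ι).PairwiseDisjoint tt := by
      intro i hi i' hi' hne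
      simpa [Finset.disjoint_iff_inter_eq_empty] using hdisj i (hU hi) i' (hU hi') hne
    calc ∑ ω : T → κ, (∏ j, w j (ω j)) * ∏ i ∈ U, ∏ j ∈ tt i, χ j (ω j)
        = ∑ ω : T → κ, ∏ j, (w j (ω j) * if j ∈ U.biUnion tt then χ j (ω j) else 1) := by
          refine Finset.sum_congr rfl fun ω _ => ?_
          rw [Finset.prod_mul_distrib]
          congr 1
          rw [Finset.prod_ite_mem univ (U.biUnion tt) (fun j => χ j (ω j)), Finset.univ_inter,
            Finset.prod_biUnion hpd]
      _ = ∏ j, ∑ o, (w j o * if j ∈ U.biUnion tt then χ j o else 1) :=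
          sum_pi_prod (fun j o => w j o * if j ∈ U.biUnion tt then χ j o else 1)
      _ = ∏ j, (if j ∈ U.biUnion tt then (∑ o, w j o * χ j o) else 1) := by
          refine Finset.prod_congr rfl fun j _ => ?_
          by_cases hj : j ∈ U.biUnion tt
          · simp only [hj, if_true]
          · simp only [hj, if_false, mul_one, hw j]
      _ = ∏ i ∈ U, ∏ j ∈ tt i, (∑ o, w j o * χ j o) := by
          rw [Finset.prod_ite_mem univ (U.biUnion tt) (fun j => ∑ o, w j o * χ j o),
            Finset.univ_inter, Finset.prod_biUnion hpd]
  calc ∑ ω : T → κ, (∏ j, w j (ω j)) * ∏ i ∈ V, (aa + bb * ∏ j ∈ tt i, χ j (ω j))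
      = ∑ ω : T → κ, ∑ U ∈ V.powerset, (aa ^ U.card * bb ^ (V \ U).card) *
          ((∏ j, w j (ω j)) * ∏ i ∈ V \ U, ∏ j ∈ tt i, χ j (ω j)) := by
        refine Finset.sum_congr rfl fun ω _ => ?_
        rw [Finset.prod_add, Finset.mul_sum]
        refine Finset.sum_congr rfl fun U hU => ?_
        rw [Finset.prod_const, Finset.prod_mul_distrib, Finset.prod_const]
        ring
    _ = ∑ U ∈ V.powerset, (aa ^ U.card * bb ^ (V \ U).card) *
          ∏ i ∈ V \ U, ∏ j ∈ tt i, (∑ o, w j o * χ j o) := by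
        rw [Finset.sum_comm]
        refine Finset.sum_congr rfl fun U _ => ?_
        rw [← Finset.mul_sum, key (V \ U) (Finset.sdiff_subset)]
    _ = ∏ i ∈ V, (aa + bb * ∏ j ∈ tt i, (∑ o, w j o * χ j o)) := by
        rw [Finset.prod_add]
        refine Finset.sum_congr rfl fun U _ => ?_
        rw [Finset.prod_const, Finset.prod_mul_distrib, Finset.prod_const]
        ring

/-- Hoelder / AM-GM bound -/
lemma holder {Ω : Type*} [Fintype Ω] (q : Ω → ℝ) (hq : ∀ ω, 0 ≤ q ω) (hq1 : ∑ ω, q ω = 1)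
    (m : ℕ) (hm : 0 < m) (g : Fin m → Ω → ℝ) (hg : ∀ c ω, 0 < g c ω) :
    ∑ ω, q ω * ∏ c, g c ω ≤ ∏ c, (∑ ω, q ω * (g c ω) ^ m) ^ ((m:ℝ)⁻¹) := by
  have hmR : (0:ℝ) < (m:ℝ) := by exact_mod_cast hm
  set A : Fin m → ℝ := fun c => ∑ ω, q ω * (g c ω) ^ m with hA
  have hex : ∃ ω, 0 < q ω := by
    by_contra h
    push_neg at h
    have : ∑ ω, q ω ≤ 0 := Finset.sum_nonpos fun ω _ => h ω
    linarith
  obtain ⟨ω₀, hω₀⟩ := hex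
  have hApos : ∀ c, 0 < A c := by
    intro c
    have h1 : 0 < q ω₀ * (g c ω₀) ^ m := mul_pos hω₀ (pow_pos (hg c ω₀) m)
    have h2 : q ω₀ * (g c ω₀) ^ m ≤ A c :=
      Finset.single_le_sum (f := fun ω => q ω * (g c ω) ^ m)
        (fun ω _ => mul_nonneg (hq ω) (pow_nonneg (hg c ω).le m)) (mem_univ ω₀)
    linarith
  have hprodApos : 0 < ∏ c, (A c) ^ ((m:ℝ)⁻¹) :=
    Finset.prod_pos fun c _ => Real.rpow_pos_of_pos (hApos c) _
  have hpt : ∀ ω, ∏ c, g c ω ≤ (∏ c, (A c) ^ ((m:ℝ)⁻¹)) * ((m:ℝ)⁻¹ * ∑ c, (g c ω) ^ m / A c) := by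
    intro ω
    have hgm := Real.geom_mean_le_arith_mean_weighted univ (fun _ => (m:ℝ)⁻¹)
        (fun c => (g c ω) ^ m / A c) (fun _ _ => inv_nonneg.2 hmR.le)
        (by rw [Finset.sum_const, Finset.card_univ, Fintype.card_fin, nsmul_eq_mul,
              mul_inv_cancel₀ hmR.ne'])
        (fun c _ => div_nonneg (pow_nonneg (hg c ω).le m) (hApos c).le)
    have heq : ∏ c, ((g c ω) ^ m / A c) ^ ((m:ℝ)⁻¹)
        = (∏ c, g c ω) / ∏ c, (A c) ^ ((m:ℝ)⁻¹) := by
      rw [← Finset.prod_div_distrib]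
      refine Finset.prod_congr rfl fun c _ => ?_
      rw [Real.div_rpow (pow_nonneg (hg c ω).le m) (hApos c).le]
      congr 1
      rw [← Real.rpow_natCast (g c ω) m, ← Real.rpow_mul (hg c ω).le,
        mul_inv_cancel₀ hmR.ne', Real.rpow_one]
    rw [heq, div_le_iff₀ hprodApos] at hgm
    calc ∏ c, g c ω ≤ (∑ c, (m:ℝ)⁻¹ * ((g c ω) ^ m / A c)) * ∏ c, (A c) ^ ((m:ℝ)⁻¹) := hgm
      _ = (∏ c, (A c) ^ ((m:ℝ)⁻¹)) * ((m:ℝ)⁻¹ * ∑ c, (g c ω) ^ m / A c) := by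
          rw [← Finset.mul_sum]; ring
  set K := ∏ c, (A c) ^ ((m:ℝ)⁻¹) with hK
  calc ∑ ω, q ω * ∏ c, g c ω
      ≤ ∑ ω, q ω * (K * ((m:ℝ)⁻¹ * ∑ c, (g c ω) ^ m / A c)) :=
        Finset.sum_le_sum fun ω _ => mul_le_mul_of_nonneg_left (hpt ω) (hq ω)
    _ = ∑ c, (K * (m:ℝ)⁻¹ / A c) * ∑ ω, q ω * (g c ω) ^ m := by
        have h3 : ∀ ω, q ω * (K * ((m:ℝ)⁻¹ * ∑ c, (g c ω) ^ m / A c))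
            = ∑ c, (K * (m:ℝ)⁻¹ / A c) * (q ω * (g c ω) ^ m) := by
          intro ω
          rw [Finset.mul_sum, Finset.mul_sum, Finset.mul_sum]
          exact Finset.sum_congr rfl fun c _ => by ring
        rw [Finset.sum_congr rfl fun ω _ => h3 ω, Finset.sum_comm]
        exact Finset.sum_congr rfl fun c _ => (Finset.mul_sum _ _ _).symm
    _ = ∑ c : Fin m, K * (m:ℝ)⁻¹ := by
        refine Finset.sum_congr rfl fun c _ => ?_
        rw [show (∑ ω, q ω * (g c ω) ^ m) = A c from rfl,
          div_mul_cancel₀ _ (hApos c).ne']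
    _ = K := by
        rw [Finset.sum_const, Finset.card_univ, Fintype.card_fin, nsmul_eq_mul]
        field_simp
end Stmt5Aux

/-- Under the hypotheses of Theorem `round1` — (1) `M ℓ ≥ a0 * |C ℓ|`
for all `ℓ` with `a0 ∈ (0,1]`, (2) `Δ + 1 ≤ d * |C ℓ| / ln n` with `d ≤ a0²/576`,
(3) `k ≤ n/4`, and a feasible fractional LP solution `(x, z)` of cost `B` — perform
`R ≥ 4 ln n` independent rounds; in each round every tag `j` is independently assigned to
cluster `ℓ` with probability `x ℓ j / 2` and to no cluster otherwise.  A round is accepted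
if its output covers at least `M ℓ / 8` objects in every cluster `C ℓ` and uses at most
`2B` tags in total.  With probability at least `1 - 1/n` some round is accepted. -/
theorem stmt5 {S T : Type*} [Fintype S] [Fintype T] [DecidableEq S] [DecidableEq T]
    {k : ℕ} (C : Fin k → Finset S) (t : S → Finset T)
    (M : Fin k → ℝ) (x : Fin k → T → ℝ) (z : S → ℝ) (B : ℝ)
    (hpart : ∀ i : S, ∃! ℓ : Fin k, i ∈ C ℓ)
    (hx0 : ∀ ℓ j, 0 ≤ x ℓ j) (hx1 : ∀ ℓ j, x ℓ j ≤ 1)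
    (hz0 : ∀ i, 0 ≤ z i) (hz1 : ∀ i, z i ≤ 1)
    (hcov : ∀ ℓ, ∀ i ∈ C ℓ, z i ≤ ∑ j ∈ t i, x ℓ j)
    (hM : ∀ ℓ, M ℓ ≤ ∑ i ∈ C ℓ, z i)
    (hone : ∀ j, ∑ ℓ, x ℓ j ≤ 1)
    (hB : B = ∑ ℓ, ∑ j, x ℓ j)
    (a0 : ℝ) (ha0 : 0 < a0) (ha1 : a0 ≤ 1)
    (hMa : ∀ ℓ : Fin k, a0 * ((C ℓ).card : ℝ) ≤ M ℓ)
    (d : ℝ) (hd : d ≤ a0 ^ 2 / 576)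
    (Δ : ℕ)
    (hΔ : ∀ i : S, ((Finset.univ.filter fun i' : S => (t i ∩ t i').Nonempty).card ≤ Δ))
    (hn : 3 ≤ Fintype.card S)
    (hΔb : ∀ ℓ : Fin k,
      ((Δ : ℝ) + 1) ≤ d * ((C ℓ).card : ℝ) / Real.log (Fintype.card S))
    (hk : (k : ℝ) ≤ (Fintype.card S : ℝ) / 4)
    (R : ℕ) (hR : 4 * Real.log (Fintype.card S) ≤ (R : ℝ))
    (prob : (Fin R → T → Option (Fin k)) → ℝ)
    (hprob : ∀ a, prob a =
      ∏ r, ∏ j, (match a r j with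
        | some ℓ' => x ℓ' j / 2
        | none => 1 - (∑ ℓ', x ℓ' j) / 2)) :
    1 - 1 / (Fintype.card S : ℝ) ≤
      ∑ a ∈ Finset.univ.filter (fun a : Fin R → T → Option (Fin k) =>
        ∃ r : Fin R,
          (∀ ℓ : Fin k,
            M ℓ / 8 ≤ (((C ℓ).filter fun i => ∃ j ∈ t i, a r j = some ℓ).card : ℝ))
          ∧ ((Finset.univ.filter fun j : T => a r j ≠ none).card : ℝ) ≤ 2 * B),
        prob a := by
  classical
  have hn3 : (3:ℝ) ≤ (Fintype.card S : ℝ) := by exact_mod_cast hn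
  have hnpos : (0:ℝ) < (Fintype.card S : ℝ) := by linarith
  set L : ℝ := Real.log (Fintype.card S : ℝ) with hLdef
  have hL1 : (1:ℝ) ≤ L := by
    rw [hLdef, ← Real.log_exp 1]
    apply Real.log_le_log (Real.exp_pos 1)
    have := Real.exp_one_lt_d9
    linarith
  have hLpos : (0:ℝ) < L := lt_of_lt_of_le one_pos hL1
  -- per-tag weights
  set w : T → Option (Fin k) → ℝ := fun j o => match o with
    | some ℓ' => x ℓ' j / 2
    | none => 1 - (∑ ℓ', x ℓ' j) / 2 with hwdef
  have hw0 : ∀ j o, 0 ≤ w j o := by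
    intro j o
    cases o with
    | none =>
        have h := hone j
        show (0:ℝ) ≤ 1 - (∑ ℓ', x ℓ' j) / 2
        linarith
    | some l =>
        show (0:ℝ) ≤ x l j / 2
        have := hx0 l j
        linarith
  have hw1 : ∀ j, ∑ o, w j o = 1 := by
    intro j
    rw [Fintype.sum_option]
    show (1 - (∑ ℓ', x ℓ' j) / 2) + ∑ l, x l j / 2 = 1
    rw [← Finset.sum_div]
    ring
  set q : (T → Option (Fin k)) → ℝ := fun ω => ∏ j, w j (ω j) with hqdef
  have hq0 : ∀ ω, 0 ≤ q ω := fun ω => Finset.prod_nonneg fun j _ => hw0 j (ω j)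
  have hq1 : ∑ ω, q ω = 1 := by
    rw [hqdef, Stmt5Aux.sum_pi_prod w]
    exact Finset.prod_eq_one fun j _ => hw1 j
  have hprob' : ∀ a, prob a = ∏ r, q (a r) := by
    intro a
    rw [hprob a]
  -- the acceptance event for a single round
  set Acc : (T → Option (Fin k)) → Prop := fun ω =>
    (∀ ℓ : Fin k,
      M ℓ / 8 ≤ (((C ℓ).filter fun i => ∃ j ∈ t i, ω j = some ℓ).card : ℝ))
    ∧ ((Finset.univ.filter fun j : T => ω j ≠ none).card : ℝ) ≤ 2 * B with hAccdef
  set s1 : ℝ := ∑ ω ∈ Finset.univ.filter (fun ω : T → Option (Fin k) => ¬ Acc ω), q ω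
    with hs1def
  have hs1nonneg : 0 ≤ s1 := Finset.sum_nonneg fun ω _ => hq0 ω
  -- main single-round estimate
  have hs1half : s1 ≤ 1/2 := by
    rcases Nat.eq_zero_or_pos k with hk0 | hk0
    · -- no clusters: every ω is accepted
      have hAcc_all : ∀ ω : T → Option (Fin k), Acc ω := by
        intro ω
        constructor
        · intro ℓ
          exact absurd ℓ.2 (by omega)
        · have hB0 : B = 0 := by
            rw [hB]
            apply Finset.sum_eq_zero
            intro ℓ _
            exact absurd ℓ.2 (by omega)
          have hfe : (Finset.univ.filter fun j : T => ω j ≠ none) = ∅ := by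
            rw [Finset.filter_eq_empty_iff]
            intro j _
            simp only [ne_eq, not_not]
            cases hcase : ω j with
            | none => rfl
            | some l => exact absurd l.2 (by omega)
          rw [hfe, hB0]
          simp
      have hfe2 : (Finset.univ.filter fun ω : T → Option (Fin k) => ¬ Acc ω) = ∅ := by
        rw [Finset.filter_eq_empty_iff]
        intro ω _
        exact not_not_intro (hAcc_all ω)
      rw [hs1def, hfe2, Finset.sum_empty]
      norm_num
    · -- main case
      have hℓ0 : (0:ℕ) < k := hk0
      set ℓ0 : Fin k := ⟨0, hk0⟩ with hℓ0def
      have hd0 : 0 < d := by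
        by_contra hcon
        push_neg at hcon
        have h1 := hΔb ℓ0
        have h2 : d * ((C ℓ0).card : ℝ) ≤ 0 :=
          mul_nonpos_of_nonpos_of_nonneg hcon (Nat.cast_nonneg _)
        have h3 : d * ((C ℓ0).card : ℝ) / L ≤ 0 := div_nonpos_of_nonpos_of_nonneg h2 hLpos.le
        have h4 : (0:ℝ) ≤ (Δ:ℝ) := Nat.cast_nonneg Δ
        linarith
      have hCpos : ∀ ℓ : Fin k, (0:ℝ) < ((C ℓ).card : ℝ) := by
        intro ℓ
        have h2 : ((Δ:ℝ) + 1) * L ≤ d * ((C ℓ).card : ℝ) := by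
          rw [← le_div_iff₀ hLpos]
          exact hΔb ℓ
        by_contra hcon
        push_neg at hcon
        have h3 : d * ((C ℓ).card : ℝ) ≤ 0 := mul_nonpos_of_nonneg_of_nonpos hd0.le hcon
        have h4 : (0:ℝ) ≤ (Δ:ℝ) := Nat.cast_nonneg Δ
        nlinarith
      have hMbig : ∀ ℓ : Fin k, 576 * (((Δ:ℝ) + 1) * L) ≤ M ℓ := by
        intro ℓ
        have h2 : ((Δ:ℝ) + 1) * L ≤ d * ((C ℓ).card : ℝ) := by
          rw [← le_div_iff₀ hLpos]
          exact hΔb ℓ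
        have h3 : d * ((C ℓ).card : ℝ) ≤ a0 ^ 2 / 576 * ((C ℓ).card : ℝ) :=
          mul_le_mul_of_nonneg_right hd (Nat.cast_nonneg _)
        have h4 : a0 * ((C ℓ).card : ℝ) ≤ M ℓ := hMa ℓ
        have h5 : (0:ℝ) < ((C ℓ).card : ℝ) := hCpos ℓ
        nlinarith [mul_le_mul_of_nonneg_left h4 ha0.le, mul_pos ha0 h5,
          mul_nonneg (sub_nonneg.2 ha1) (le_trans (mul_pos ha0 h5).le h4)]
      have hMpos : ∀ ℓ, 0 < M ℓ := fun ℓ => lt_of_lt_of_le (mul_pos ha0 (hCpos ℓ)) (hMa ℓ)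
      have hBpos : 0 < B := by
        have hXle : M ℓ0 ≤ ((C ℓ0).card : ℝ) * ∑ j, x ℓ0 j := by
          calc M ℓ0 ≤ ∑ i ∈ C ℓ0, z i := hM ℓ0
            _ ≤ ∑ i ∈ C ℓ0, ∑ j, x ℓ0 j := by
                refine Finset.sum_le_sum fun i hi => ?_
                refine le_trans (hcov ℓ0 i hi) ?_
                exact Finset.sum_le_sum_of_subset_of_nonneg (Finset.subset_univ (t i))
                  (fun j _ _ => hx0 ℓ0 j)
            _ = ((C ℓ0).card : ℝ) * ∑ j, x ℓ0 j := by
                rw [Finset.sum_const, nsmul_eq_mul]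
        have hX : 0 < ∑ j, x ℓ0 j := by
          by_contra hcon
          push_neg at hcon
          have h6 := hMpos ℓ0
          nlinarith [hCpos ℓ0]
        rw [hB]
        calc (0:ℝ) < ∑ j, x ℓ0 j := hX
          _ ≤ ∑ ℓ, ∑ j, x ℓ j :=
            Finset.single_le_sum (fun ℓ _ => Finset.sum_nonneg fun j _ => hx0 ℓ j)
              (Finset.mem_univ ℓ0)
      have hBne : B ≠ 0 := ne_of_gt hBpos
      -- expected cost
      have hind : ∀ j : T, ∑ o : Option (Fin k), w j o * (if o = none then (0:ℝ) else 1)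
          = (∑ ℓ, x ℓ j) / 2 := by
        intro j
        rw [Fintype.sum_option]
        have h8 : w j none * (if (none : Option (Fin k)) = none then (0:ℝ) else 1) = 0 := by
          rw [if_pos rfl, mul_zero]
        rw [h8, zero_add]
        have h7 : ∀ l : Fin k, w j (some l) *
            (if (some l : Option (Fin k)) = none then (0:ℝ) else 1) = x l j / 2 := by
          intro l
          rw [if_neg (Option.some_ne_none l), mul_one]
        rw [Finset.sum_congr rfl fun l _ => h7 l, ← Finset.sum_div]
      have hEcost : ∑ ω : T → Option (Fin k), q ω *
          ((Finset.univ.filter fun j : T => ω j ≠ none).card : ℝ) = B / 2 := by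
        have h1 : ∀ ω : T → Option (Fin k),
            ((Finset.univ.filter fun j : T => ω j ≠ none).card : ℝ)
            = ∑ j, (if ω j = none then (0:ℝ) else 1) := by
          intro ω
          rw [Finset.card_filter]
          push_cast
          refine Finset.sum_congr rfl fun j _ => ?_
          by_cases h : ω j = none <;> simp [h]
        calc ∑ ω : T → Option (Fin k), q ω * ((Finset.univ.filter fun j : T => ω j ≠ none).card : ℝ)
            = ∑ ω : T → Option (Fin k), ∑ j, q ω * (if ω j = none then (0:ℝ) else 1) := by
              refine Finset.sum_congr rfl fun ω _ => ?_
              rw [h1 ω, Finset.mul_sum]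
          _ = ∑ j, ∑ ω : T → Option (Fin k), q ω * (if ω j = none then (0:ℝ) else 1) :=
              Finset.sum_comm
          _ = ∑ j, ∑ o : Option (Fin k), w j o * (if o = none then (0:ℝ) else 1) := by
              refine Finset.sum_congr rfl fun j _ => ?_
              exact Stmt5Aux.sum_q_single w hw1 j (fun o => if o = none then (0:ℝ) else 1)
          _ = ∑ j, (∑ ℓ, x ℓ j)/2 := Finset.sum_congr rfl fun j _ => hind j
          _ = B / 2 := by
              rw [hB, ← Finset.sum_div, Finset.sum_comm]
      -- Markov bound for the cost
      have hcost : ∑ ω ∈ Finset.univ.filter (fun ω : T → Option (Fin k) =>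
          ¬ (((Finset.univ.filter fun j : T => ω j ≠ none).card : ℝ) ≤ 2 * B)), q ω ≤ 1/4 := by
        have h2B : (0:ℝ) < 2 * B := by linarith
        calc ∑ ω ∈ Finset.univ.filter (fun ω : T → Option (Fin k) => ¬ (((Finset.univ.filter fun j : T => ω j ≠ none).card : ℝ) ≤ 2 * B)), q ω
            ≤ ∑ ω ∈ Finset.univ.filter (fun ω : T → Option (Fin k) => ¬ (((Finset.univ.filter fun j : T => ω j ≠ none).card : ℝ) ≤ 2 * B)), q ω * ((Finset.univ.filter fun j : T => ω j ≠ none).card : ℝ) / (2*B) := by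
              refine Finset.sum_le_sum fun ω hω => ?_
              rw [Finset.mem_filter] at hω
              have hlt : 2 * B < ((Finset.univ.filter fun j : T => ω j ≠ none).card : ℝ) :=
                lt_of_not_ge hω.2
              rw [mul_div_assoc]
              refine le_mul_of_one_le_right (hq0 ω) ?_
              rw [le_div_iff₀ h2B]
              linarith
          _ ≤ ∑ ω : T → Option (Fin k), q ω * ((Finset.univ.filter fun j : T => ω j ≠ none).card : ℝ) / (2*B) := by
              refine Finset.sum_le_sum_of_subset_of_nonneg (Finset.filter_subset _ _)
                fun ω _ _ => ?_
              exact div_nonneg (mul_nonneg (hq0 ω) (Nat.cast_nonneg _)) h2B.le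
          _ = (B/2) / (2*B) := by rw [← Finset.sum_div, hEcost]
          _ = 1/4 := by
              field_simp
              ring
      -- per cluster bound
      have hclu : ∀ ℓ : Fin k, ∑ ω ∈ Finset.univ.filter (fun ω : T → Option (Fin k) =>
          ¬ (M ℓ / 8 ≤ (((C ℓ).filter fun i => ∃ j ∈ t i, ω j = some ℓ).card : ℝ))), q ω
          ≤ 1 / (Fintype.card S : ℝ)^2 := by
        intro ℓ
        set m : ℕ := Δ + 1 with hmdef
        have hmpos : 0 < m := Nat.succ_pos Δ
        have hmR : ((m:ℝ)) = (Δ:ℝ) + 1 := by rw [hmdef]; push_cast; ring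
        have hmRpos : (0:ℝ) < (m:ℝ) := by rw [hmR]; positivity
        obtain ⟨col, hcol⟩ := Stmt5Aux.exists_coloring t m hmpos
          (fun i => lt_of_le_of_lt (hΔ i) (Nat.lt_succ_self Δ))
        set χ : T → Option (Fin k) → ℝ := fun _ o => if o = some ℓ then 0 else 1 with hχdef
        set p : S → ℝ := fun i => 1 - ∏ j ∈ t i, (1 - x ℓ j / 2) with hpdef
        set Zc : Fin m → (T → Option (Fin k)) → ℝ := fun c ω =>
          ∑ i ∈ (C ℓ).filter (fun i => col i = c),
            (if ∃ j ∈ t i, ω j = some ℓ then (1:ℝ) else 0) with hZcdef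
        set Z : (T → Option (Fin k)) → ℝ := fun ω =>
          (((C ℓ).filter fun i => ∃ j ∈ t i, ω j = some ℓ).card : ℝ) with hZdef
        show ∑ ω ∈ Finset.univ.filter (fun ω : T → Option (Fin k) => ¬ (M ℓ / 8 ≤ Z ω)), q ω
          ≤ 1 / (Fintype.card S : ℝ)^2
        have hZsum : ∀ ω, Z ω = ∑ c : Fin m, Zc c ω := by
          intro ω
          have h1 : Z ω = ∑ i ∈ C ℓ, (if ∃ j ∈ t i, ω j = some ℓ then (1:ℝ) else 0) := by
            rw [hZdef]
            simp only [Finset.card_filter]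
            push_cast
            rfl
          rw [h1, hZcdef, Finset.sum_fiberwise (C ℓ) col
            (fun i => if ∃ j ∈ t i, ω j = some ℓ then (1:ℝ) else 0)]
        set lam0 : ℝ := Real.log 2 / (m:ℝ) with hlam0def
        have hlog2pos : (0:ℝ) < Real.log 2 := by
          have := Real.log_two_gt_d9
          linarith
        have hlam0pos : 0 < lam0 := div_pos hlog2pos hmRpos
        -- per-tag marginals
        have hmarg : ∀ j : T, ∑ o : Option (Fin k), w j o * χ j o = 1 - x ℓ j / 2 := by
          intro j
          rw [Fintype.sum_option]
          have h2 : w j none * χ j none = 1 - (∑ l, x l j)/2 := by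
            have : χ j none = 1 := by
              rw [hχdef]
              simp
            rw [this, mul_one]
          have h1 : ∀ l : Fin k, w j (some l) * χ j (some l)
              = x l j / 2 - (if l = ℓ then x l j / 2 else 0) := by
            intro l
            by_cases h : l = ℓ
            · subst h
              have : χ j (some l) = 0 := by rw [hχdef]; simp
              rw [this, mul_zero, if_pos rfl]
              ring
            · have : χ j (some l) = 1 := by
                rw [hχdef]
                simp only [Option.some.injEq]
                rw [if_neg h]
              rw [this, mul_one, if_neg h]
              show x l j / 2 = x l j / 2 - 0
              ring
          rw [Finset.sum_congr rfl fun l _ => h1 l, Finset.sum_sub_distrib,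
            Finset.sum_ite_eq' Finset.univ ℓ (fun l => x l j / 2), if_pos (Finset.mem_univ ℓ),
            h2, ← Finset.sum_div]
          ring
        have hQ0 : ∀ i : S, (0:ℝ) ≤ ∏ j ∈ t i, (1 - x ℓ j / 2) :=
          fun i => Finset.prod_nonneg fun j _ => by have := hx1 ℓ j; linarith
        have hQ1 : ∀ i : S, ∏ j ∈ t i, (1 - x ℓ j / 2) ≤ 1 :=
          fun i => Finset.prod_le_one (fun j _ => by have := hx1 ℓ j; linarith)
            (fun j _ => by have := hx0 ℓ j; linarith)
        have hp0 : ∀ i, 0 ≤ p i := by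
          intro i
          have := hQ1 i
          rw [hpdef]
          simp only
          linarith
        have hp1 : ∀ i, p i ≤ 1 := by
          intro i
          have := hQ0 i
          rw [hpdef]
          simp only
          linarith
        -- exact per-class expectation via independence
        have hstep3 : ∀ c : Fin m, ∑ ω : T → Option (Fin k), q ω *
            Real.exp (-(Real.log 2 * Zc c ω))
            = ∏ i ∈ (C ℓ).filter (fun i => col i = c), (1 - p i / 2) := by
          intro c
          have hdisj : ∀ i ∈ (C ℓ).filter (fun i => col i = c),
              ∀ i' ∈ (C ℓ).filter (fun i => col i = c), i ≠ i' → t i ∩ t i' = ∅ := by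
            intro i hi i' hi' hne
            rw [Finset.mem_filter] at hi hi'
            exact hcol i i' hne (hi.2.trans hi'.2.symm)
          have hpt : ∀ ω : T → Option (Fin k), Real.exp (-(Real.log 2 * Zc c ω))
              = ∏ i ∈ (C ℓ).filter (fun i => col i = c),
                ((1:ℝ)/2 + 1/2 * ∏ j ∈ t i, χ j (ω j)) := by
            intro ω
            have h1 : -(Real.log 2 * Zc c ω) = ∑ i ∈ (C ℓ).filter (fun i => col i = c),
                -(Real.log 2 * (if ∃ j ∈ t i, ω j = some ℓ then (1:ℝ) else 0)) := by
              rw [hZcdef]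
              simp only
              rw [Finset.mul_sum, Finset.sum_neg_distrib]
            rw [h1, Real.exp_sum]
            refine Finset.prod_congr rfl fun i _ => ?_
            by_cases hcovi : ∃ j ∈ t i, ω j = some ℓ
            · rw [if_pos hcovi]
              obtain ⟨j, hj, hωj⟩ := hcovi
              have hz : ∏ j' ∈ t i, χ j' (ω j') = 0 := by
                refine Finset.prod_eq_zero hj ?_
                rw [hχdef]
                simp [hωj]
              rw [hz, mul_zero, add_zero, mul_one, Real.exp_neg, Real.exp_log two_pos]
              norm_num
            · rw [if_neg hcovi]
              have ho : ∏ j' ∈ t i, χ j' (ω j') = 1 := by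
                refine Finset.prod_eq_one fun j' hj' => ?_
                rw [hχdef]
                simp only
                rw [if_neg (fun h => hcovi ⟨j', hj', h⟩)]
              rw [ho, mul_zero, neg_zero, Real.exp_zero]
              norm_num
          calc ∑ ω : T → Option (Fin k), q ω * Real.exp (-(Real.log 2 * Zc c ω))
              = ∑ ω : T → Option (Fin k), (∏ j, w j (ω j)) *
                  ∏ i ∈ (C ℓ).filter (fun i => col i = c),
                    ((1:ℝ)/2 + 1/2 * ∏ j ∈ t i, χ j (ω j)) := by
                refine Finset.sum_congr rfl fun ω _ => ?_
                rw [hpt ω, hqdef]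
            _ = ∏ i ∈ (C ℓ).filter (fun i => col i = c),
                  ((1:ℝ)/2 + 1/2 * ∏ j ∈ t i, (∑ o, w j o * χ j o)) :=
                Stmt5Aux.exp_prod_affine w hw1 _ t hdisj χ (1/2) (1/2)
            _ = ∏ i ∈ (C ℓ).filter (fun i => col i = c), (1 - p i / 2) := by
                refine Finset.prod_congr rfl fun i _ => ?_
                have hpi : p i = 1 - ∏ j ∈ t i, (1 - x ℓ j / 2) := rfl
                rw [Finset.prod_congr rfl fun j (_ : j ∈ t i) => hmarg j, hpi]
                ring
        -- lower bound on the expected coverage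
        have hpz : ∀ i ∈ C ℓ, z i / 4 ≤ p i := by
          intro i hi
          have hQle : ∏ j ∈ t i, (1 - x ℓ j / 2) ≤ Real.exp (-(z i / 2)) := by
            calc ∏ j ∈ t i, (1 - x ℓ j / 2) ≤ ∏ j ∈ t i, Real.exp (-(x ℓ j / 2)) := by
                  refine Finset.prod_le_prod (fun j _ => by have := hx1 ℓ j; linarith)
                    (fun j _ => by have := Real.add_one_le_exp (-(x ℓ j / 2)); linarith)
              _ = Real.exp (∑ j ∈ t i, -(x ℓ j / 2)) := (Real.exp_sum _ _).symm
              _ ≤ Real.exp (-(z i / 2)) := by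
                  apply Real.exp_le_exp.2
                  have h := hcov ℓ i hi
                  have h9 : ∑ j ∈ t i, -(x ℓ j / 2) = -((∑ j ∈ t i, x ℓ j) / 2) := by
                    rw [Finset.sum_neg_distrib, ← Finset.sum_div]
                  rw [h9]
                  linarith
          have hexp : Real.exp (-(z i / 2)) ≤ 1 - z i / 4 := by
            have h1 := Real.add_one_le_exp (z i / 2)
            have h2 : Real.exp (-(z i / 2)) * Real.exp (z i / 2) = 1 := by
              rw [← Real.exp_add]
              simp
            have h3 := Real.exp_pos (-(z i / 2))
            have hz0' := hz0 i
            have hz1' := hz1 i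
            nlinarith [mul_le_mul_of_nonneg_left h1 h3.le]
          have h10 := hQle.trans hexp
          rw [hpdef]
          simp only
          linarith
        have hμ : M ℓ / 4 ≤ ∑ i ∈ C ℓ, p i := by
          calc M ℓ / 4 ≤ (∑ i ∈ C ℓ, z i) / 4 := by
                have := hM ℓ
                linarith
            _ = ∑ i ∈ C ℓ, z i / 4 := Finset.sum_div _ _ _
            _ ≤ ∑ i ∈ C ℓ, p i := Finset.sum_le_sum hpz
        have hfib : ∑ c : Fin m, ∑ i ∈ (C ℓ).filter (fun i => col i = c), p i
            = ∑ i ∈ C ℓ, p i := Finset.sum_fiberwise (C ℓ) col p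
        clear_value χ p Zc Z lam0
        -- Chernoff via Hoelder
        have hZc_exp : ∀ (c : Fin m) (ω : T → Option (Fin k)),
            Real.exp (-(lam0 * Zc c ω)) ^ m = Real.exp (-(Real.log 2 * Zc c ω)) := by
          intro c ω
          rw [← Real.exp_nat_mul]
          congr 1
          rw [hlam0def]
          field_simp
        have hstep2 : ∑ ω : T → Option (Fin k), q ω * Real.exp (-(lam0 * Z ω))
            ≤ ∏ c : Fin m, (∑ ω : T → Option (Fin k), q ω *
                Real.exp (-(Real.log 2 * Zc c ω))) ^ ((m:ℝ)⁻¹) := by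
          have h1 : ∀ ω, Real.exp (-(lam0 * Z ω)) = ∏ c : Fin m, Real.exp (-(lam0 * Zc c ω)) := by
            intro ω
            rw [← Real.exp_sum]
            congr 1
            rw [hZsum ω, Finset.mul_sum, Finset.sum_neg_distrib]
          calc ∑ ω : T → Option (Fin k), q ω * Real.exp (-(lam0 * Z ω))
              = ∑ ω : T → Option (Fin k), q ω * ∏ c : Fin m, Real.exp (-(lam0 * Zc c ω)) :=
                Finset.sum_congr rfl fun ω _ => by rw [h1 ω]
            _ ≤ ∏ c : Fin m, (∑ ω : T → Option (Fin k), q ω *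
                  Real.exp (-(lam0 * Zc c ω)) ^ m) ^ ((m:ℝ)⁻¹) :=
                Stmt5Aux.holder q hq0 hq1 m hmpos _ (fun c ω => Real.exp_pos _)
            _ = ∏ c : Fin m, (∑ ω : T → Option (Fin k), q ω *
                  Real.exp (-(Real.log 2 * Zc c ω))) ^ ((m:ℝ)⁻¹) := by
                refine Finset.prod_congr rfl fun c _ => ?_
                congr 1
                exact Finset.sum_congr rfl fun ω _ => by rw [hZc_exp c ω]
        -- bound the per-class expectation
        have hstep4 : ∀ c : Fin m,
            ∏ i ∈ (C ℓ).filter (fun i => col i = c), (1 - p i / 2)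
            ≤ Real.exp (-(∑ i ∈ (C ℓ).filter (fun i => col i = c), p i) / 2) := by
          intro c
          calc ∏ i ∈ (C ℓ).filter (fun i => col i = c), (1 - p i / 2)
              ≤ ∏ i ∈ (C ℓ).filter (fun i => col i = c), Real.exp (-(p i / 2)) := by
                refine Finset.prod_le_prod (fun i _ => ?_) (fun i _ => ?_)
                · have := hp1 i
                  linarith
                · have h := Real.add_one_le_exp (-(p i / 2))
                  linarith
            _ = Real.exp (-(∑ i ∈ (C ℓ).filter (fun i => col i = c), p i) / 2) := by
                rw [← Real.exp_sum]
                congr 1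
                rw [neg_div, Finset.sum_div, ← Finset.sum_neg_distrib]
        -- pointwise Chernoff
        have hstep1 : ∑ ω ∈ Finset.univ.filter
              (fun ω : T → Option (Fin k) => ¬ (M ℓ / 8 ≤ Z ω)), q ω
            ≤ Real.exp (lam0 * (M ℓ / 8)) *
              ∑ ω : T → Option (Fin k), q ω * Real.exp (-(lam0 * Z ω)) := by
          calc ∑ ω ∈ Finset.univ.filter (fun ω : T → Option (Fin k) => ¬ (M ℓ / 8 ≤ Z ω)), q ω
              ≤ ∑ ω ∈ Finset.univ.filter (fun ω : T → Option (Fin k) => ¬ (M ℓ / 8 ≤ Z ω)),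
                  q ω * (Real.exp (lam0 * (M ℓ / 8)) * Real.exp (-(lam0 * Z ω))) := by
                refine Finset.sum_le_sum fun ω hω => ?_
                rw [Finset.mem_filter] at hω
                have hlt : Z ω < M ℓ / 8 := lt_of_not_ge hω.2
                rw [← Real.exp_add]
                refine le_mul_of_one_le_right (hq0 ω) (Real.one_le_exp ?_)
                nlinarith [mul_pos hlam0pos (sub_pos.2 hlt)]
            _ ≤ ∑ ω : T → Option (Fin k),
                  q ω * (Real.exp (lam0 * (M ℓ / 8)) * Real.exp (-(lam0 * Z ω))) := by
                refine Finset.sum_le_sum_of_subset_of_nonneg (Finset.filter_subset _ _)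
                  fun ω _ _ => ?_
                exact mul_nonneg (hq0 ω)
                  (mul_nonneg (Real.exp_pos _).le (Real.exp_pos _).le)
            _ = Real.exp (lam0 * (M ℓ / 8)) *
                  ∑ ω : T → Option (Fin k), q ω * Real.exp (-(lam0 * Z ω)) := by
                rw [Finset.mul_sum]
                exact Finset.sum_congr rfl fun ω _ => by ring
        -- numeric estimate
        have hnum : lam0 * (M ℓ / 8) - (∑ i ∈ C ℓ, p i)/(2*(m:ℝ)) ≤ -(2*L) := by
          have hM' : 576 * ((m:ℝ) * L) ≤ M ℓ := by
            rw [hmR]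
            exact hMbig ℓ
          have hlog2lt : Real.log 2 < 0.6931471808 := Real.log_two_lt_d9
          have h8m : (0:ℝ) < 8*(m:ℝ) := by positivity
          have key : Real.log 2 * M ℓ - 4 * (∑ i ∈ C ℓ, p i) ≤ -(16 * (m:ℝ) * L) := by
            have h1 : (0:ℝ) ≤ 1 - Real.log 2 := by linarith
            nlinarith [mul_le_mul_of_nonneg_left hM' h1, hμ, hMpos ℓ,
              mul_pos hmRpos hLpos]
          calc lam0 * (M ℓ / 8) - (∑ i ∈ C ℓ, p i)/(2*(m:ℝ))
              = (Real.log 2 * M ℓ - 4 * (∑ i ∈ C ℓ, p i)) / (8*(m:ℝ)) := by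
                rw [hlam0def]
                field_simp
                ring
            _ ≤ (-(16 * (m:ℝ) * L)) / (8*(m:ℝ)) := by
                gcongr
            _ = -(2*L) := by
                field_simp
                ring
        -- put everything together
        have hfinal : ∑ ω ∈ Finset.univ.filter
            (fun ω : T → Option (Fin k) => ¬ (M ℓ / 8 ≤ Z ω)), q ω
            ≤ 1 / (Fintype.card S : ℝ)^2 := by
          calc ∑ ω ∈ Finset.univ.filter (fun ω : T → Option (Fin k) => ¬ (M ℓ / 8 ≤ Z ω)), q ω
              ≤ Real.exp (lam0 * (M ℓ / 8)) *
                  ∑ ω : T → Option (Fin k), q ω * Real.exp (-(lam0 * Z ω)) := hstep1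
            _ ≤ Real.exp (lam0 * (M ℓ / 8)) * ∏ c : Fin m,
                  (∑ ω : T → Option (Fin k), q ω *
                    Real.exp (-(Real.log 2 * Zc c ω))) ^ ((m:ℝ)⁻¹) :=
                mul_le_mul_of_nonneg_left hstep2 (Real.exp_pos _).le
            _ ≤ Real.exp (lam0 * (M ℓ / 8)) * ∏ c : Fin m,
                  Real.exp (-(∑ i ∈ (C ℓ).filter (fun i => col i = c), p i) / 2 * (m:ℝ)⁻¹) := by
                refine mul_le_mul_of_nonneg_left ?_ (Real.exp_pos _).le
                refine Finset.prod_le_prod (fun c _ => ?_) (fun c _ => ?_)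
                · refine Real.rpow_nonneg ?_ _
                  exact Finset.sum_nonneg fun ω _ =>
                    mul_nonneg (hq0 ω) (Real.exp_pos _).le
                · have h0 : (0:ℝ) ≤ ∑ ω : T → Option (Fin k), q ω *
                      Real.exp (-(Real.log 2 * Zc c ω)) :=
                    Finset.sum_nonneg fun ω _ => mul_nonneg (hq0 ω) (Real.exp_pos _).le
                  have h1 : ∑ ω : T → Option (Fin k), q ω * Real.exp (-(Real.log 2 * Zc c ω))
                      ≤ Real.exp (-(∑ i ∈ (C ℓ).filter (fun i => col i = c), p i) / 2) := by
                    rw [hstep3 c]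
                    exact hstep4 c
                  calc (∑ ω : T → Option (Fin k), q ω *
                        Real.exp (-(Real.log 2 * Zc c ω))) ^ ((m:ℝ)⁻¹)
                      ≤ (Real.exp (-(∑ i ∈ (C ℓ).filter (fun i => col i = c), p i) / 2))
                          ^ ((m:ℝ)⁻¹) :=
                        Real.rpow_le_rpow h0 h1 (inv_nonneg.2 hmRpos.le)
                    _ = Real.exp (-(∑ i ∈ (C ℓ).filter (fun i => col i = c), p i) / 2
                          * (m:ℝ)⁻¹) := (Real.exp_mul _ _).symm
            _ = Real.exp (lam0 * (M ℓ / 8) - (∑ i ∈ C ℓ, p i)/(2*(m:ℝ))) := by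
                rw [← Real.exp_sum, ← Real.exp_add]
                congr 1
                have h2 : ∑ c : Fin m, (-(∑ i ∈ (C ℓ).filter (fun i => col i = c), p i) / 2
                    * (m:ℝ)⁻¹)
                    = -((∑ c : Fin m, ∑ i ∈ (C ℓ).filter (fun i => col i = c), p i)
                        / (2*(m:ℝ))) := by
                  calc ∑ c : Fin m, (-(∑ i ∈ (C ℓ).filter (fun i => col i = c), p i) / 2
                      * (m:ℝ)⁻¹)
                      = ∑ c : Fin m, -((∑ i ∈ (C ℓ).filter (fun i => col i = c), p i)
                          / (2*(m:ℝ))) :=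
                        Finset.sum_congr rfl fun c _ => by ring
                    _ = -(∑ c : Fin m, (∑ i ∈ (C ℓ).filter (fun i => col i = c), p i)
                          / (2*(m:ℝ))) := Finset.sum_neg_distrib _
                    _ = -((∑ c : Fin m, ∑ i ∈ (C ℓ).filter (fun i => col i = c), p i)
                          / (2*(m:ℝ))) := by rw [Finset.sum_div]
                rw [h2, hfib]
                ring
            _ ≤ Real.exp (-(2*L)) := Real.exp_le_exp.2 hnum
            _ ≤ 1 / (Fintype.card S : ℝ)^2 := by
                have h3 : Real.exp (2*L) = (Fintype.card S:ℝ)^2 := by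
                  rw [hLdef, show (2:ℝ)*Real.log (Fintype.card S:ℝ)
                      = Real.log (Fintype.card S:ℝ) + Real.log (Fintype.card S:ℝ) by ring,
                    Real.exp_add, Real.exp_log hnpos]
                  ring
                rw [Real.exp_neg, h3, inv_eq_one_div]
        exact hfinal
      -- union bound
      have hite0 : ∀ (P : Prop) (inst : Decidable P) (ω : T → Option (Fin k)),
          (0:ℝ) ≤ @ite ℝ P inst (q ω) 0 := by
        intro P inst ω
        split
        · exact hq0 ω
        · exact le_refl 0
      have hsplit : ∀ ω : T → Option (Fin k), ¬ Acc ω →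
          (∃ ℓ : Fin k, ¬ (M ℓ / 8 ≤ (((C ℓ).filter fun i => ∃ j ∈ t i, ω j = some ℓ).card : ℝ)))
          ∨ ¬ (((Finset.univ.filter fun j : T => ω j ≠ none).card : ℝ) ≤ 2 * B) := by
        intro ω h
        rw [hAccdef] at h
        rcases not_and_or.1 h with hA | hB2
        · exact Or.inl (not_forall.1 hA)
        · exact Or.inr hB2
      have hsub2 : s1 ≤ (∑ ω ∈ Finset.univ.filter (fun ω : T → Option (Fin k) => ¬ (((Finset.univ.filter fun j : T => ω j ≠ none).card : ℝ) ≤ 2 * B)), q ω)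
          + ∑ ℓ : Fin k, ∑ ω ∈ Finset.univ.filter (fun ω : T → Option (Fin k) => ¬ (M ℓ / 8 ≤ (((C ℓ).filter fun i => ∃ j ∈ t i, ω j = some ℓ).card : ℝ))), q ω := by
        rw [hs1def, Finset.sum_filter]
        calc ∑ ω : T → Option (Fin k), (if ¬ Acc ω then q ω else 0)
            ≤ ∑ ω : T → Option (Fin k), ((if ¬ (((Finset.univ.filter fun j : T => ω j ≠ none).card : ℝ) ≤ 2 * B) then q ω else 0)
              + ∑ ℓ : Fin k, (if ¬ (M ℓ / 8 ≤ (((C ℓ).filter fun i => ∃ j ∈ t i, ω j = some ℓ).card : ℝ)) then q ω else 0)) := by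
              refine Finset.sum_le_sum fun ω _ => ?_
              have hcnn : (0:ℝ) ≤ if ¬ (((Finset.univ.filter fun j : T => ω j ≠ none).card : ℝ) ≤ 2 * B) then q ω else 0 := hite0 _ _ ω
              have hsnn : (0:ℝ) ≤ ∑ ℓ : Fin k, (if ¬ (M ℓ / 8 ≤ (((C ℓ).filter fun i => ∃ j ∈ t i, ω j = some ℓ).card : ℝ)) then q ω else 0) :=
                Finset.sum_nonneg fun ℓ _ => hite0 _ _ ω
              by_cases h : Acc ω
              · rw [if_neg (not_not_intro h)]
                linarith
              · rw [if_pos h]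
                rcases hsplit ω h with ⟨ℓ1, hℓ1⟩ | hB2
                · have hle : q ω ≤ ∑ ℓ : Fin k, (if ¬ (M ℓ / 8 ≤ (((C ℓ).filter fun i => ∃ j ∈ t i, ω j = some ℓ).card : ℝ)) then q ω else 0) := by
                    calc q ω = (if ¬ (M ℓ1 / 8 ≤ (((C ℓ1).filter fun i => ∃ j ∈ t i, ω j = some ℓ1).card : ℝ)) then q ω else 0) := (if_pos hℓ1).symm
                      _ ≤ _ := Finset.single_le_sum
                          (f := fun ℓ : Fin k => if ¬ (M ℓ / 8 ≤ (((C ℓ).filter fun i => ∃ j ∈ t i, ω j = some ℓ).card : ℝ)) then q ω else 0)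
                          (fun ℓ _ => hite0 _ _ ω) (Finset.mem_univ ℓ1)
                  linarith
                · rw [if_pos hB2]
                  linarith
          _ = _ := by
              rw [Finset.sum_add_distrib]
              congr 1
              · rw [← Finset.sum_filter]
              · rw [Finset.sum_comm]
                refine Finset.sum_congr rfl fun ℓ _ => ?_
                rw [← Finset.sum_filter]
      have hksum : ∑ _ℓ : Fin k, (1:ℝ)/(Fintype.card S:ℝ)^2 ≤ 1/12 := by
        rw [Finset.sum_const, Finset.card_univ, Fintype.card_fin, nsmul_eq_mul]
        rw [mul_one_div, div_le_div_iff₀ (by positivity) (by norm_num)]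
        nlinarith [hn3, hnpos, hk]
      calc s1 ≤ _ := hsub2
        _ ≤ 1/4 + ∑ _ℓ : Fin k, (1:ℝ)/(Fintype.card S:ℝ)^2 :=
            add_le_add hcost (Finset.sum_le_sum fun ℓ _ => hclu ℓ)
        _ ≤ 1/4 + 1/12 := by linarith [hksum]
        _ ≤ 1/2 := by norm_num
  -- total probability is one
  have htot : ∑ a : Fin R → T → Option (Fin k), prob a = 1 := by
    rw [Finset.sum_congr rfl fun a _ => hprob' a,
      Stmt5Aux.sum_pi_prod (fun _ ω => q ω)]
    exact Finset.prod_eq_one fun r _ => hq1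
  -- probability that no round is accepted
  have hbad : ∑ a ∈ Finset.univ.filter (fun a : Fin R → T → Option (Fin k) => ¬ ∃ r, Acc (a r)), prob a = s1 ^ R := by
    calc ∑ a ∈ Finset.univ.filter (fun a : Fin R → T → Option (Fin k) => ¬ ∃ r, Acc (a r)), prob a
        = ∑ a : Fin R → T → Option (Fin k), ∏ r, (if Acc (a r) then 0 else q (a r)) := by
          rw [Finset.sum_filter]
          refine Finset.sum_congr rfl fun a _ => ?_
          by_cases h : ∃ r, Acc (a r)
          · rw [if_neg (not_not_intro h)]
            obtain ⟨r, hr⟩ := h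
            exact (Finset.prod_eq_zero (f := fun r => if Acc (a r) then (0:ℝ) else q (a r)) (Finset.mem_univ r) (if_pos hr)).symm
          · rw [if_pos h, hprob' a]
            refine Finset.prod_congr rfl fun r _ => ?_
            rw [if_neg (fun hr => h ⟨r, hr⟩)]
      _ = ∏ r : Fin R, ∑ ω : T → Option (Fin k), (if Acc ω then 0 else q ω) :=
          Stmt5Aux.sum_pi_prod (fun _ ω => if Acc ω then 0 else q ω)
      _ = s1 ^ R := by
          have h2 : (∑ ω, (if Acc ω then 0 else q ω)) = s1 := by
            rw [hs1def, Finset.sum_filter]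
            refine Finset.sum_congr rfl fun ω _ => ?_
            by_cases h : Acc ω <;> simp [h]
          rw [Finset.prod_congr rfl fun (_ : Fin R) _ => h2, Finset.prod_const,
            Finset.card_univ, Fintype.card_fin]
  have hgood : ∑ a ∈ Finset.univ.filter (fun a : Fin R → T → Option (Fin k) => ∃ r, Acc (a r)), prob a = 1 - s1 ^ R := by
    have h := Finset.sum_filter_add_sum_filter_not Finset.univ
      (fun a : Fin R → T → Option (Fin k) => ∃ r, Acc (a r)) prob
    rw [htot, hbad] at h
    linarith
  -- the target set is the same
  have hset : (Finset.univ.filter (fun a : Fin R → T → Option (Fin k) =>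
      ∃ r : Fin R,
        (∀ ℓ : Fin k,
          M ℓ / 8 ≤ (((C ℓ).filter fun i => ∃ j ∈ t i, a r j = some ℓ).card : ℝ))
        ∧ ((Finset.univ.filter fun j : T => a r j ≠ none).card : ℝ) ≤ 2 * B))
      = Finset.univ.filter (fun a : Fin R → T → Option (Fin k) => ∃ r, Acc (a r)) := by
    exact Finset.filter_congr fun a _ => Iff.rfl
  rw [hset, hgood]
  -- final numeric computation
  have hpow : s1 ^ R ≤ 1 / (Fintype.card S : ℝ) := by
    have hlog2 : (1:ℝ)/4 ≤ Real.log 2 := by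
      have := Real.log_two_gt_d9
      linarith
    have h1 : L ≤ (R:ℝ) * Real.log 2 := by
      have h2 : (4*L) * (1/4 : ℝ) ≤ (R:ℝ) * Real.log 2 := by
        apply mul_le_mul hR hlog2 (by norm_num)
        positivity
      linarith
    have h2R : (Fintype.card S : ℝ) ≤ 2 ^ R := by
      calc (Fintype.card S : ℝ) = Real.exp L := (Real.exp_log hnpos).symm
        _ ≤ Real.exp ((R:ℝ) * Real.log 2) := Real.exp_le_exp.2 h1
        _ = 2 ^ R := by rw [Real.exp_nat_mul, Real.exp_log two_pos]
    calc s1 ^ R ≤ (1/2 : ℝ) ^ R := pow_le_pow_left₀ hs1nonneg hs1half R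
      _ = 1 / 2 ^ R := by rw [div_pow, one_pow]
      _ ≤ 1 / (Fintype.card S : ℝ) := one_div_le_one_div_of_le hnpos h2R
  linarith
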